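/- Every regular tetrahedron in ℤ³ can be completed to a cube in ℤ³: for every regular tetrahedron T in ℤ³ there exists a cube C in ℤ³ such that the vertex set of T is contained in the vertex set of C. -/

import Mathlib

/-- Dot product of integer vectors in `ℤ³`. -/
def dot3 (u v : Fin 3 → ℤ) : ℤ := ∑ i, u i * v i

/-- Squared Euclidean distance between two points of `ℤ³`. -/
def distSq (u v : Fin 3 → ℤ) : ℤ := dot3 (u - v) (u - v)

/-- A regular tetrahedron in `ℤ³`: four points with equal nonzero pairwise distances. -/
def IsRegularTetrahedron (T : Set (Fin 3 → ℤ)) : Prop :=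
  T.ncard = 4 ∧ ∃ s : ℤ, 0 < s ∧ ∀ u ∈ T, ∀ v ∈ T, u ≠ v → distSq u v = s

/-- A cube in `ℤ³`: the eight points `v + ε₁e₁ + ε₂e₂ + ε₃e₃`, `εᵢ ∈ {0,1}`,
where `e₁, e₂, e₃` are pairwise orthogonal of equal nonzero length. -/
def IsCube (C : Set (Fin 3 → ℤ)) : Prop :=
  ∃ v e₁ e₂ e₃ : Fin 3 → ℤ,
    dot3 e₁ e₂ = 0 ∧ dot3 e₁ e₃ = 0 ∧ dot3 e₂ e₃ = 0 ∧
    dot3 e₁ e₁ = dot3 e₂ e₂ ∧ dot3 e₂ e₂ = dot3 e₃ e₃ ∧ dot3 e₁ e₁ ≠ 0 ∧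
    C = {p | ∃ ε₁ ε₂ ε₃ : ℤ, ε₁ ∈ ({0, 1} : Set ℤ) ∧ ε₂ ∈ ({0, 1} : Set ℤ) ∧
      ε₃ ∈ ({0, 1} : Set ℤ) ∧ p = v + ε₁ • e₁ + ε₂ • e₂ + ε₃ • e₃}

lemma sq_mod_four (x : ℤ) : (Even x ∧ x^2 % 4 = 0) ∨ (¬ Even x ∧ x^2 % 4 = 1) := by
  rcases Int.even_or_odd x with ⟨k, rfl⟩ | ⟨k, rfl⟩
  · left
    refine ⟨⟨k, rfl⟩, ?_⟩
    have h : (k + k)^2 = k^2 * 4 := by ring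
    rw [h]; exact Int.mul_emod_left _ _
  · right
    constructor
    · simp [Int.even_iff, Int.odd_iff] at *
    · have h : (2*k + 1)^2 = (k^2 + k) * 4 + 1 := by ring
      rw [h]; omega

lemma even_of_four_dvd_sq_sum (x y z : ℤ) (h : (4:ℤ) ∣ x^2 + y^2 + z^2) :
    Even x ∧ Even y ∧ Even z := by
  rcases sq_mod_four x with ⟨hx, hx4⟩ | ⟨hx, hx4⟩ <;>
  rcases sq_mod_four y with ⟨hy, hy4⟩ | ⟨hy, hy4⟩ <;>
  rcases sq_mod_four z with ⟨hz, hz4⟩ | ⟨hz, hz4⟩ <;>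
    first
    | exact ⟨hx, hy, hz⟩
    | (exfalso; omega)

lemma zmod2_parity : ∀ u0 u1 u2 v0 v1 v2 w0 w1 w2 : ZMod 2,
    u0+u1+u2 = 0 → v0+v1+v2 = 0 → w0+w1+w2 = 0 →
    u0*v0+u1*v1+u2*v2 = 1 → u0*w0+u1*w1+u2*w2 = 1 → v0*w0+v1*w1+v2*w2 = 1 →
    u0+v0+w0 = 0 ∧ u1+v1+w1 = 0 ∧ u2+v2+w2 = 0 := by decide

lemma odd_cast_zmod2 {t : ℤ} (h : Odd t) : (t : ZMod 2) = 1 := by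
  obtain ⟨k, rfl⟩ := h
  push_cast
  ring_nf
  simp [show (2 : ZMod 2) = 0 from rfl]

lemma zmod2_sq (a : ZMod 2) : a^2 = a := by revert a; decide

lemma parity_main (u0 u1 u2 v0 v1 v2 w0 w1 w2 t : ℤ)
    (huu : u0^2+u1^2+u2^2 = 2*t) (hvv : v0^2+v1^2+v2^2 = 2*t)
    (hww : w0^2+w1^2+w2^2 = 2*t)
    (huv : u0*v0+u1*v1+u2*v2 = t) (huw : u0*w0+u1*w1+u2*w2 = t)
    (hvw : v0*w0+v1*w1+v2*w2 = t) :
    (2:ℤ) ∣ u0+v0+w0 ∧ (2:ℤ) ∣ u1+v1+w1 ∧ (2:ℤ) ∣ u2+v2+w2 := by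
  rcases Int.even_or_odd t with ⟨r, hr⟩ | ht
  · have h4 : (4:ℤ) ∣ 2*t := ⟨r, by omega⟩
    obtain ⟨hu0, hu1, hu2⟩ := even_of_four_dvd_sq_sum u0 u1 u2 (huu ▸ h4)
    obtain ⟨hv0, hv1, hv2⟩ := even_of_four_dvd_sq_sum v0 v1 v2 (hvv ▸ h4)
    obtain ⟨hw0, hw1, hw2⟩ := even_of_four_dvd_sq_sum w0 w1 w2 (hww ▸ h4)
    rw [Int.even_iff] at *
    omega
  · have ht1 : (t : ZMod 2) = 1 := odd_cast_zmod2 ht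
    have cuu := congrArg (fun x : ℤ => (x : ZMod 2)) huu
    have cvv := congrArg (fun x : ℤ => (x : ZMod 2)) hvv
    have cww := congrArg (fun x : ℤ => (x : ZMod 2)) hww
    have cuv := congrArg (fun x : ℤ => (x : ZMod 2)) huv
    have cuw := congrArg (fun x : ℤ => (x : ZMod 2)) huw
    have cvw := congrArg (fun x : ℤ => (x : ZMod 2)) hvw
    push_cast at cuu cvv cww cuv cuw cvw
    rw [zmod2_sq, zmod2_sq, zmod2_sq] at cuu cvv cww
    rw [ht1] at cuv cuw cvw
    rw [ht1, show (2:ZMod 2)*1 = 0 from rfl] at cuu cvv cww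
    obtain ⟨g0, g1, g2⟩ := zmod2_parity _ _ _ _ _ _ _ _ _ cuu cvv cww cuv cuw cvw
    refine ⟨?_, ?_, ?_⟩ <;>
    · rw [show (2:ℤ) = ((2:ℕ):ℤ) by norm_num]
      rw [← ZMod.intCast_zmod_eq_zero_iff_dvd]
      push_cast
      assumption

/-- Every regular tetrahedron in `ℤ³` can be completed to a cube in `ℤ³`. -/
theorem regularTetrahedron_subset_cube (T : Set (Fin 3 → ℤ))
    (hT : IsRegularTetrahedron T) :
    ∃ C : Set (Fin 3 → ℤ), IsCube C ∧ T ⊆ C := by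
  obtain ⟨hcard, s, hs, hd⟩ := hT
  have hfin : T.Finite := Set.finite_of_ncard_ne_zero (by omega)
  obtain ⟨a, ha⟩ := Set.nonempty_of_ncard_ne_zero (s := T) (by omega)
  have h3 : (T \ {a}).ncard = 3 := by
    rw [Set.ncard_diff_singleton_of_mem ha, hcard]
  obtain ⟨b, c, d, hbc, hbd, hcd, hEq⟩ := Set.ncard_eq_three.mp h3
  have hbm : b ∈ T \ {a} := by rw [hEq]; exact Set.mem_insert _ _
  have hcm : c ∈ T \ {a} := by rw [hEq]; simp
  have hdm : d ∈ T \ {a} := by rw [hEq]; simp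
  have hbT : b ∈ T := hbm.1
  have hcT : c ∈ T := hcm.1
  have hdT : d ∈ T := hdm.1
  have hba : a ≠ b := fun h => hbm.2 (by simp [h.symm])
  have hca : a ≠ c := fun h => hcm.2 (by simp [h.symm])
  have hda : a ≠ d := fun h => hdm.2 (by simp [h.symm])
  -- the six distance equations, expanded in coordinates
  have Eab := hd a ha b hbT hba
  have Eac := hd a ha c hcT hca
  have Ead := hd a ha d hdT hda
  have Ebc := hd b hbT c hcT hbc
  have Ebd := hd b hbT d hdT hbd
  have Ecd := hd c hcT d hdT hcd
  simp only [distSq, dot3, Fin.sum_univ_three, Pi.sub_apply] at Eab Eac Ead Ebc Ebd Ecd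
  -- half of s
  set t : ℤ := (b 0 - a 0)*(c 0 - a 0) + (b 1 - a 1)*(c 1 - a 1) + (b 2 - a 2)*(c 2 - a 2)
    with htdef
  have hst : s = 2 * t := by rw [htdef]; linear_combination Ebc - Eab - Eac
  have huu : (b 0 - a 0)^2 + (b 1 - a 1)^2 + (b 2 - a 2)^2 = 2*t := by
    linear_combination Eab + hst
  have hvv : (c 0 - a 0)^2 + (c 1 - a 1)^2 + (c 2 - a 2)^2 = 2*t := by
    linear_combination Eac + hst
  have hww : (d 0 - a 0)^2 + (d 1 - a 1)^2 + (d 2 - a 2)^2 = 2*t := by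
    linear_combination Ead + hst
  have huv : (b 0 - a 0)*(c 0 - a 0) + (b 1 - a 1)*(c 1 - a 1) + (b 2 - a 2)*(c 2 - a 2) = t :=
    htdef.symm
  have huw : (b 0 - a 0)*(d 0 - a 0) + (b 1 - a 1)*(d 1 - a 1) + (b 2 - a 2)*(d 2 - a 2) = t := by
    have h2 : 2 * ((b 0 - a 0)*(d 0 - a 0) + (b 1 - a 1)*(d 1 - a 1) + (b 2 - a 2)*(d 2 - a 2))
        = 2 * t := by linear_combination Eab + Ead - Ebd + hst - hst + hst
    omega
  have hvw : (c 0 - a 0)*(d 0 - a 0) + (c 1 - a 1)*(d 1 - a 1) + (c 2 - a 2)*(d 2 - a 2) = t := by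
    have h2 : 2 * ((c 0 - a 0)*(d 0 - a 0) + (c 1 - a 1)*(d 1 - a 1) + (c 2 - a 2)*(d 2 - a 2))
        = 2 * t := by linear_combination Eac + Ead - Ecd + hst - hst + hst
    omega
  obtain ⟨p0, p1, p2⟩ := parity_main (b 0 - a 0) (b 1 - a 1) (b 2 - a 2)
    (c 0 - a 0) (c 1 - a 1) (c 2 - a 2) (d 0 - a 0) (d 1 - a 1) (d 2 - a 2) t
    huu hvv hww huv huw hvw
  -- the three edge vectors of the cube
  obtain ⟨e1, h10, h11, h12⟩ : ∃ e : Fin 3 → ℤ,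
      2 * e 0 = (c 0 - a 0) + (d 0 - a 0) - (b 0 - a 0) ∧
      2 * e 1 = (c 1 - a 1) + (d 1 - a 1) - (b 1 - a 1) ∧
      2 * e 2 = (c 2 - a 2) + (d 2 - a 2) - (b 2 - a 2) :=
    ⟨![((c 0 - a 0) + (d 0 - a 0) - (b 0 - a 0))/2,
       ((c 1 - a 1) + (d 1 - a 1) - (b 1 - a 1))/2,
       ((c 2 - a 2) + (d 2 - a 2) - (b 2 - a 2))/2],
     Int.mul_ediv_cancel' (by omega), Int.mul_ediv_cancel' (by omega),
     Int.mul_ediv_cancel' (by omega)⟩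
  obtain ⟨e2, h20, h21, h22⟩ : ∃ e : Fin 3 → ℤ,
      2 * e 0 = (b 0 - a 0) + (d 0 - a 0) - (c 0 - a 0) ∧
      2 * e 1 = (b 1 - a 1) + (d 1 - a 1) - (c 1 - a 1) ∧
      2 * e 2 = (b 2 - a 2) + (d 2 - a 2) - (c 2 - a 2) :=
    ⟨![((b 0 - a 0) + (d 0 - a 0) - (c 0 - a 0))/2,
       ((b 1 - a 1) + (d 1 - a 1) - (c 1 - a 1))/2,
       ((b 2 - a 2) + (d 2 - a 2) - (c 2 - a 2))/2],
     Int.mul_ediv_cancel' (by omega), Int.mul_ediv_cancel' (by omega),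
     Int.mul_ediv_cancel' (by omega)⟩
  obtain ⟨e3, h30, h31, h32⟩ : ∃ e : Fin 3 → ℤ,
      2 * e 0 = (b 0 - a 0) + (c 0 - a 0) - (d 0 - a 0) ∧
      2 * e 1 = (b 1 - a 1) + (c 1 - a 1) - (d 1 - a 1) ∧
      2 * e 2 = (b 2 - a 2) + (c 2 - a 2) - (d 2 - a 2) :=
    ⟨![((b 0 - a 0) + (c 0 - a 0) - (d 0 - a 0))/2,
       ((b 1 - a 1) + (c 1 - a 1) - (d 1 - a 1))/2,
       ((b 2 - a 2) + (c 2 - a 2) - (d 2 - a 2))/2],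
     Int.mul_ediv_cancel' (by omega), Int.mul_ediv_cancel' (by omega),
     Int.mul_ediv_cancel' (by omega)⟩
  -- dot product facts
  have d12 : dot3 e1 e2 = 0 := by
    have key : (2*e1 0)*(2*e2 0) + (2*e1 1)*(2*e2 1) + (2*e1 2)*(2*e2 2) = 0 := by
      rw [h10, h11, h12, h20, h21, h22]
      linear_combination 2*huv - hvv + hww - huu
    simp only [dot3, Fin.sum_univ_three]
    linarith [key]
  have d13 : dot3 e1 e3 = 0 := by
    have key : (2*e1 0)*(2*e3 0) + (2*e1 1)*(2*e3 1) + (2*e1 2)*(2*e3 2) = 0 := by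
      rw [h10, h11, h12, h30, h31, h32]
      linear_combination hvv - hww - huu + 2*huw
    simp only [dot3, Fin.sum_univ_three]
    linarith [key]
  have d23 : dot3 e2 e3 = 0 := by
    have key : (2*e2 0)*(2*e3 0) + (2*e2 1)*(2*e3 1) + (2*e2 2)*(2*e3 2) = 0 := by
      rw [h20, h21, h22, h30, h31, h32]
      linear_combination huu - hww - hvv + 2*hvw
    simp only [dot3, Fin.sum_univ_three]
    linarith [key]
  have d11 : dot3 e1 e1 = t := by
    have key : (2*e1 0)*(2*e1 0) + (2*e1 1)*(2*e1 1) + (2*e1 2)*(2*e1 2) = 4*t := by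
      rw [h10, h11, h12]
      linear_combination hvv + hww + huu + 2*hvw - 2*huv - 2*huw
    simp only [dot3, Fin.sum_univ_three]
    linarith [key]
  have d22 : dot3 e2 e2 = t := by
    have key : (2*e2 0)*(2*e2 0) + (2*e2 1)*(2*e2 1) + (2*e2 2)*(2*e2 2) = 4*t := by
      rw [h20, h21, h22]
      linear_combination huu + hww + hvv + 2*huw - 2*huv - 2*hvw
    simp only [dot3, Fin.sum_univ_three]
    linarith [key]
  have d33 : dot3 e3 e3 = t := by
    have key : (2*e3 0)*(2*e3 0) + (2*e3 1)*(2*e3 1) + (2*e3 2)*(2*e3 2) = 4*t := by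
      rw [h30, h31, h32]
      linear_combination huu + hvv + hww + 2*huv - 2*huw - 2*hvw
    simp only [dot3, Fin.sum_univ_three]
    linarith [key]
  have htpos : t ≠ 0 := by omega
  refine ⟨{p | ∃ ε₁ ε₂ ε₃ : ℤ, ε₁ ∈ ({0, 1} : Set ℤ) ∧ ε₂ ∈ ({0, 1} : Set ℤ) ∧
      ε₃ ∈ ({0, 1} : Set ℤ) ∧ p = a + ε₁ • e1 + ε₂ • e2 + ε₃ • e3},
    ⟨a, e1, e2, e3, d12, d13, d23, by rw [d11, d22], by rw [d22, d33],
     by rw [d11]; exact htpos, rfl⟩, ?_⟩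
  intro x hx
  have hx4 : x = a ∨ x = b ∨ x = c ∨ x = d := by
    by_cases hxa : x = a
    · exact Or.inl hxa
    · refine Or.inr ?_
      have hxm : x ∈ T \ {a} := ⟨hx, hxa⟩
      rw [hEq] at hxm
      simpa using hxm
  rcases hx4 with rfl | rfl | rfl | rfl
  · exact ⟨0, 0, 0, by norm_num, by norm_num, by norm_num, by simp⟩
  · have c0 : x 0 = a 0 + e2 0 + e3 0 := by omega
    have c1 : x 1 = a 1 + e2 1 + e3 1 := by omega
    have c2 : x 2 = a 2 + e2 2 + e3 2 := by omega
    refine ⟨0, 1, 1, by norm_num, by norm_num, by norm_num, ?_⟩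
    funext i
    simp only [Pi.add_apply, Pi.smul_apply, smul_eq_mul, zero_mul, one_mul, add_zero]
    fin_cases i
    · exact c0
    · exact c1
    · exact c2
  · have c0 : x 0 = a 0 + e1 0 + e3 0 := by omega
    have c1 : x 1 = a 1 + e1 1 + e3 1 := by omega
    have c2 : x 2 = a 2 + e1 2 + e3 2 := by omega
    refine ⟨1, 0, 1, by norm_num, by norm_num, by norm_num, ?_⟩
    funext i
    simp only [Pi.add_apply, Pi.smul_apply, smul_eq_mul, zero_mul, one_mul, add_zero]
    fin_cases i
    · exact c0
    · exact c1
    · exact c2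
  · have c0 : x 0 = a 0 + e1 0 + e2 0 := by omega
    have c1 : x 1 = a 1 + e1 1 + e2 1 := by omega
    have c2 : x 2 = a 2 + e1 2 + e2 2 := by omega
    refine ⟨1, 1, 0, by norm_num, by norm_num, by norm_num, ?_⟩
    funext i
    simp only [Pi.add_apply, Pi.smul_apply, smul_eq_mul, zero_mul, one_mul, add_zero]
    fin_cases i
    · exact c0
    · exact c1
    · exact c2
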